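/- Let X be a Tychonoff space, H ⊆ X a closed set, F ⊆ X a finite set, ε > 0, and s : F → ℝ a function with |s(x)| < ε for all x ∈ H ∩ F. Then there exists a continuous function g : X → ℝ such that g(x) = s(x) for all x ∈ F and |g(x)| < ε for all x ∈ H. -/

import Mathlib

/-- Bump function: `1` at a point, `0` on a closed set not containing it. -/
lemma bump_aux {X : Type*} [TopologicalSpace X] [T35Space X]
    {K : Set X} (hK : IsClosed K) {a : X} (ha : a ∉ K) :
    ∃ f : X → ℝ, Continuous f ∧ f a = 1 ∧ Set.EqOn f 0 K := by
  obtain ⟨f, hf, hfa, hfK⟩ := CompletelyRegularSpace.completely_regular a K hK ha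
  refine ⟨fun y => 1 - (f y : ℝ), by continuity, by simp [hfa], fun x hx => ?_⟩
  have : f x = 1 := hfK hx
  simp [this]

/-- A continuous function agreeing with a prescribed function on a finite set. -/
lemma exists_cont_eqOn {X : Type*} [TopologicalSpace X] [T35Space X]
    {F : Set X} (hF : F.Finite) (s : X → ℝ) :
    ∃ g : X → ℝ, Continuous g ∧ Set.EqOn g s F := by
  refine hF.induction_on (motive := fun F _ => ∃ g : X → ℝ, Continuous g ∧ Set.EqOn g s F) _
    ⟨0, continuous_const, fun x hx => hx.elim⟩ ?_
  intro a t hat htfin ih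
  · obtain ⟨g, hg, hgs⟩ := ih
    obtain ⟨χ, hχ, hχa, hχ0⟩ := bump_aux htfin.isClosed hat
    refine ⟨fun y => g y + (s a - g a) * χ y, by continuity, fun x hx => ?_⟩
    rcases hx with rfl | hx
    · simp [hχa]
    · have : χ x = 0 := hχ0 hx
      simp [this, hgs hx]

/-- A continuous function that is `1` on a finite set and `0` on a disjoint closed set. -/
lemma exists_cont_zero_one {X : Type*} [TopologicalSpace X] [T35Space X]
    {H : Set X} (hH : IsClosed H) {F : Set X} (hF : F.Finite) (hd : ∀ x ∈ F, x ∉ H) :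
    ∃ ψ : X → ℝ, Continuous ψ ∧ Set.EqOn ψ 0 H ∧ Set.EqOn ψ 1 F := by
  revert hd
  refine hF.induction_on
    (motive := fun F _ => (∀ x ∈ F, x ∉ H) → ∃ ψ : X → ℝ, Continuous ψ ∧ Set.EqOn ψ 0 H ∧ Set.EqOn ψ 1 F) _
    (fun _ => ⟨0, continuous_const, fun x _ => rfl, fun x hx => hx.elim⟩) ?_
  intro a t hat htfin ih hd
  · obtain ⟨ψ, hψ, hψH, hψ1⟩ := ih (fun x hx => hd x (Set.mem_insert_of_mem a hx))
    have haK : a ∉ H ∪ t := by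
      rintro (h | h)
      · exact hd a (Set.mem_insert a t) h
      · exact hat h
    obtain ⟨χ, hχ, hχa, hχ0⟩ := bump_aux (hH.union htfin.isClosed) haK
    refine ⟨fun y => ψ y + (1 - ψ a) * χ y, by continuity, fun x hx => ?_, fun x hx => ?_⟩
    · have h1 : ψ x = 0 := hψH hx
      have h2 : χ x = 0 := hχ0 (Or.inl hx)
      simp [h1, h2]
    · rcases hx with rfl | hx
      · simp [hχa]
      · have h1 : ψ x = 1 := hψ1 hx
        have h2 : χ x = 0 := hχ0 (Or.inr hx)
        simp [h1, h2]

/-- Let `H ⊆ X` be closed, `F ⊆ X` finite, `ε > 0` and `s : X → ℝ` with `|s x| < ε`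
for `x ∈ H ∩ F`. Then there is a continuous `g : X → ℝ` with `g = s` on `F` and
`|g| < ε` on `H`. -/
theorem modification_lemma {X : Type*} [TopologicalSpace X] [T35Space X]
    (H : Set X) (hH : IsClosed H) (F : Set X) (hF : F.Finite)
    (ε : ℝ) (hε : 0 < ε) (s : X → ℝ) (hs : ∀ x ∈ H ∩ F, |s x| < ε) :
    ∃ g : X → ℝ, Continuous g ∧ (∀ x ∈ F, g x = s x) ∧ ∀ x ∈ H, |g x| < ε := by
  -- a threshold ε' with max_{H∩F} |s| ≤ ε' < ε and 0 ≤ ε'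
  have hHF : (H ∩ F).Finite := hF.inter_of_right H
  classical
  obtain ⟨ε', hε'pos, hε'lt, hε'le⟩ :
      ∃ ε' : ℝ, 0 ≤ ε' ∧ ε' < ε ∧ ∀ x ∈ H ∩ F, |s x| ≤ ε' := by
    set T : Finset ℝ := insert (ε / 2) (hHF.toFinset.image fun x => |s x|) with hT
    have hTne : T.Nonempty := ⟨ε / 2, Finset.mem_insert_self _ _⟩
    refine ⟨T.max' hTne, ?_, ?_, ?_⟩
    · have : ε / 2 ≤ T.max' hTne := T.le_max' _ (Finset.mem_insert_self _ _)
      linarith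
    · have hmem : T.max' hTne ∈ insert (ε / 2) (hHF.toFinset.image fun x => |s x|) :=
        T.max'_mem hTne
      rcases Finset.mem_insert.mp hmem with h | h
      · linarith
      · obtain ⟨x, hx, hxe⟩ := Finset.mem_image.mp h
        rw [← hxe]
        exact hs x (hHF.mem_toFinset.mp hx)
    · exact fun x hx =>
        T.le_max' _ (Finset.mem_insert_of_mem (Finset.mem_image_of_mem _ (hHF.mem_toFinset.mpr hx)))
  -- auxiliary continuous functions
  obtain ⟨g₁, hg₁c, hg₁⟩ := exists_cont_eqOn hF s
  obtain ⟨ψ, hψc, hψ0, hψ1⟩ := exists_cont_zero_one hH (hF.diff (t := H))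
    (fun x hx => hx.2)
  -- truncated version of g₁
  let g₂ : X → ℝ := fun y => max (-ε') (min ε' (g₁ y))
  have hg₂ : ∀ y, g₂ y = max (-ε') (min ε' (g₁ y)) := fun _ => rfl
  have hg₂c : Continuous g₂ := by
    apply Continuous.max continuous_const
    exact Continuous.min continuous_const hg₁c
  have hg₂bd : ∀ y, |g₂ y| ≤ ε' := by
    intro y
    rw [abs_le]
    constructor
    · exact le_max_left _ _
    · exact max_le (by linarith) (min_le_left _ _)
  have hg₂eq : ∀ x ∈ H ∩ F, g₂ x = s x := by
    intro x hx
    have h1 : g₁ x = s x := hg₁ hx.2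
    have h2 := hε'le x hx
    rw [abs_le] at h2
    rw [hg₂, h1, min_eq_right h2.2, max_eq_right h2.1]
  refine ⟨fun y => g₂ y + (g₁ y - g₂ y) * ψ y,
    hg₂c.add (((hg₁c.sub hg₂c).mul hψc)), fun x hx => ?_, fun x hx => ?_⟩
  · by_cases hxH : x ∈ H
    · have h0 : ψ x = 0 := hψ0 hxH
      have := hg₂eq x ⟨hxH, hx⟩
      simp [h0, this]
    · have h1 : ψ x = 1 := hψ1 ⟨hx, hxH⟩
      simp [h1, hg₁ hx]
  · have h0 : ψ x = 0 := hψ0 hx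
    simp only [h0, mul_zero, add_zero]
    exact lt_of_le_of_lt (hg₂bd x) hε'lt
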